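/- There exists a constant K > 0 such that for every integer k ≥ 1 and every subset A ⊆ ℤ^{⌈k/2⌉}, one has P((B(k,1), …, B(k,⌈k/2⌉)) ∈ A) ≤ K · P((S_1, …, S_{⌈k/2⌉}) ∈ A), where B(k,·) is a uniform bridge in 𝓑_k^{≥−1} and (S_j) is the random walk with step law P(step = i) = 2^{−(i+2)}, i ≥ −1. -/

import Mathlib

open MeasureTheory ProbabilityTheory Filter
open scoped ENNReal

/-- The set `𝓑_k^{≥−1}` of discrete bridges: integer sequences `(b 1, …, b k)`
(0-indexed here as `b : Fin k → ℤ`) all of whose increments, starting from `b 0 = 0`,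
are at least `-1`, and which end at `0`. -/
def IsBridge {k : ℕ} (b : Fin k → ℤ) : Prop :=
  (∀ i : Fin k, -1 ≤ (Fin.cons 0 b : Fin (k + 1) → ℤ) i.succ
      - (Fin.cons 0 b : Fin (k + 1) → ℤ) i.castSucc) ∧
  (Fin.cons (0 : ℤ) b : Fin (k + 1) → ℤ) (Fin.last k) = 0

section NatLemmas
open Nat

lemma aux_two_mul_cB (r : ℕ) : 2 * centralBinom r ≤ centralBinom (r + 1) := by
  have h := Nat.succ_mul_centralBinom_succ r
  have : (r + 1) * (2 * centralBinom r) ≤ (r + 1) * centralBinom (r + 1) := by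
    rw [h]; ring_nf; nlinarith [Nat.centralBinom_pos r]
  exact Nat.le_of_mul_le_mul_left this (Nat.succ_pos r)

lemma four_pow_cB (n : ℕ) : ∀ d, d ≤ n + 1 →
    4 ^ d * (2 * n + 2 - d) * centralBinom n ≤ (2 * n + 2) * centralBinom (n + d) := by
  intro d
  induction d with
  | zero => intro _; simp [Nat.mul_assoc]
  | succ d ih =>
    intro hd
    have hdn : d ≤ n := by omega
    have H := ih (by omega)
    have hrec := Nat.succ_mul_centralBinom_succ (n + d)
    -- goal: 4^(d+1) * (2n+1-d) * cB n ≤ (2n+2) * cB (n+d+1)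
    have hmul : (n + d + 1) * (4 ^ (d + 1) * (2 * n + 1 - d) * centralBinom n)
        ≤ (n + d + 1) * ((2 * n + 2) * centralBinom (n + d + 1)) := by
      have h2 : (n + d + 1) * ((2 * n + 2) * centralBinom (n + d + 1))
          = (2 * n + 2) * (2 * (2 * (n + d) + 1) * centralBinom (n + d)) := by
        calc (n + d + 1) * ((2 * n + 2) * centralBinom (n + d + 1))
            = (2 * n + 2) * ((n + d + 1) * centralBinom (n + d + 1)) := by ring
          _ = (2 * n + 2) * (2 * (2 * (n + d) + 1) * centralBinom (n + d)) := by rw [hrec]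
      rw [h2]
      have key : (n + d + 1) * (4 ^ (d + 1) * (2 * n + 1 - d))
          ≤ 2 * (2 * (n + d) + 1) * (4 ^ d * (2 * n + 2 - d)) := by
        obtain ⟨c, hc⟩ : ∃ c, c + d = 2 * n + 1 := ⟨2 * n + 1 - d, by omega⟩
        have e1 : 2 * n + 1 - d = c := by omega
        have e2 : 2 * n + 2 - d = c + 1 := by omega
        rw [e1, e2, pow_succ]
        nlinarith [pow_pos (show (0:ℕ) < 4 by norm_num) d]
      calc (n + d + 1) * (4 ^ (d + 1) * (2 * n + 1 - d) * centralBinom n)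
          = ((n + d + 1) * (4 ^ (d + 1) * (2 * n + 1 - d))) * centralBinom n := by ring
        _ ≤ (2 * (2 * (n + d) + 1) * (4 ^ d * (2 * n + 2 - d))) * centralBinom n :=
            Nat.mul_le_mul_right _ key
        _ = 2 * (2 * (n + d) + 1) * (4 ^ d * (2 * n + 2 - d) * centralBinom n) := by ring
        _ ≤ 2 * (2 * (n + d) + 1) * ((2 * n + 2) * centralBinom (n + d)) :=
            Nat.mul_le_mul_left _ H
        _ = (2 * n + 2) * (2 * (2 * (n + d) + 1) * centralBinom (n + d)) := by ring
    have e : 2 * n + 2 - (d + 1) = 2 * n + 1 - d := by omega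
    rw [show n + (d + 1) = n + d + 1 from rfl, e]
    exact le_of_mul_le_mul_left hmul (show 0 < n + d + 1 by omega)

lemma four_pow_cB' {n d : ℕ} (hd : d ≤ n + 1) :
    4 ^ d * centralBinom n ≤ 2 * centralBinom (n + d) := by
  have h := four_pow_cB n d hd
  have h1 : (n + 1) * (4 ^ d * centralBinom n) ≤ 4 ^ d * (2 * n + 2 - d) * centralBinom n := by
    have : n + 1 ≤ 2 * n + 2 - d := by omega
    calc (n + 1) * (4 ^ d * centralBinom n) = 4 ^ d * (n+1) * centralBinom n := by ring
      _ ≤ 4 ^ d * (2 * n + 2 - d) * centralBinom n := by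
          exact Nat.mul_le_mul_right _ (Nat.mul_le_mul_left _ this)
  have h2 : (n + 1) * (4 ^ d * centralBinom n) ≤ (n + 1) * (2 * centralBinom (n + d)) := by
    calc (n + 1) * (4 ^ d * centralBinom n) ≤ 4 ^ d * (2 * n + 2 - d) * centralBinom n := h1
      _ ≤ (2 * n + 2) * centralBinom (n + d) := h
      _ = (n + 1) * (2 * centralBinom (n + d)) := by ring
  exact Nat.le_of_mul_le_mul_left h2 (Nat.succ_pos n)


lemma key_base (r : ℕ) : 2 ^ (r + 1) * (r + r).choose r ≤ 2 ^ r * centralBinom (r + 1) := by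
  have : (r + r).choose r = centralBinom r := by
    rw [centralBinom]; congr 1; omega
  rw [this, pow_succ]
  calc 2 ^ r * 2 * centralBinom r = 2 ^ r * (2 * centralBinom r) := by ring
    _ ≤ 2 ^ r * centralBinom (r + 1) := Nat.mul_le_mul_left _ (aux_two_mul_cB r)

lemma key_up (r : ℕ) : ∀ j, 2 ^ (r + 1) * (r + (r + j)).choose r ≤ 2 ^ (r + j) * centralBinom (r + 1) := by
  intro j
  induction j with
  | zero => simpa using key_base r
  | succ j ih =>
    set t := r + j with ht
    have hid : (r + t).choose r * (r + t + 1) = (r + t + 1).choose r * (t + 1) := by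
      have := Nat.choose_mul_succ_eq (r + t) r
      simpa [show r + t + 1 - r = t + 1 by omega] using this
    have hmul : (2 ^ (r + 1) * (r + (t + 1)).choose r) * (t + 1)
        ≤ (2 ^ (t + 1) * centralBinom (r + 1)) * (t + 1) := by
      calc (2 ^ (r + 1) * (r + (t + 1)).choose r) * (t + 1)
          = 2 ^ (r + 1) * ((r + t + 1).choose r * (t + 1)) := by ring_nf
        _ = 2 ^ (r + 1) * ((r + t).choose r * (r + t + 1)) := by rw [← hid]
        _ = (2 ^ (r + 1) * (r + t).choose r) * (r + t + 1) := by ring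
        _ ≤ (2 ^ t * centralBinom (r + 1)) * (r + t + 1) := Nat.mul_le_mul_right _ ih
        _ ≤ (2 ^ t * centralBinom (r + 1)) * (2 * (t + 1)) := by
            exact Nat.mul_le_mul_left _ (by omega)
        _ = (2 ^ (t + 1) * centralBinom (r + 1)) * (t + 1) := by ring
    exact le_of_mul_le_mul_right hmul (Nat.succ_pos t)

lemma key_down (r : ℕ) : ∀ d, d ≤ r → 2 ^ (r + 1) * (r + (r - d)).choose r ≤ 2 ^ (r - d) * centralBinom (r + 1) := by
  intro d
  induction d with
  | zero => simpa using key_base r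
  | succ d ih =>
    intro hd
    set t := r - (d + 1) with ht
    have ht1 : r - d = t + 1 := by omega
    have ih' := ih (by omega)
    rw [ht1] at ih'
    have hid : (r + t).choose r * (r + t + 1) = (r + t + 1).choose r * (t + 1) := by
      have := Nat.choose_mul_succ_eq (r + t) r
      simpa [show r + t + 1 - r = t + 1 by omega] using this
    have hdouble : 2 * (r + t).choose r ≤ (r + t + 1).choose r := by
      have h2 : (2 * (r + t).choose r) * (t + 1) ≤ (r + t + 1).choose r * (t + 1) := by
        calc (2 * (r + t).choose r) * (t + 1) = (r + t).choose r * (2 * (t + 1)) := by ring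
          _ ≤ (r + t).choose r * (r + t + 1) := Nat.mul_le_mul_left _ (by omega)
          _ = (r + t + 1).choose r * (t + 1) := hid
      exact le_of_mul_le_mul_right h2 (Nat.succ_pos t)
    have : 2 * (2 ^ (r + 1) * (r + t).choose r) ≤ 2 * (2 ^ t * centralBinom (r + 1)) := by
      calc 2 * (2 ^ (r + 1) * (r + t).choose r) = 2 ^ (r + 1) * (2 * (r + t).choose r) := by ring
        _ ≤ 2 ^ (r + 1) * (r + t + 1).choose r := Nat.mul_le_mul_left _ hdouble
        _ = 2 ^ (r + 1) * (r + (t + 1)).choose r := by ring_nf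
        _ ≤ 2 ^ (t + 1) * centralBinom (r + 1) := ih'
        _ = 2 * (2 ^ t * centralBinom (r + 1)) := by ring
    exact le_of_mul_le_mul_left this (by norm_num)

lemma key_lemma : ∀ n t, 2 ^ n * (n + t - 1).choose t ≤ 2 ^ t * centralBinom n := by
  intro n t
  cases n with
  | zero =>
    cases t with
    | zero => simp [centralBinom]
    | succ t =>
      have : (0 + (t + 1) - 1).choose (t + 1) = 0 := Nat.choose_eq_zero_of_lt (by omega)
      simp [this]
  | succ r =>
    have hsymm : (r + 1 + t - 1).choose t = (r + t).choose r := by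
      have h1 : r + 1 + t - 1 = r + t := by omega
      rw [h1]
      have := Nat.choose_symm (show t ≤ r + t by omega)
      simpa [show r + t - t = r by omega] using this.symm
    rw [hsymm]
    rcases le_or_gt r t with h | h
    · obtain ⟨j, rfl⟩ : ∃ j, t = r + j := ⟨t - r, by omega⟩
      exact key_up r j
    · obtain ⟨d, hd, rfl⟩ : ∃ d, d ≤ r ∧ t = r - d := ⟨r - t, by omega, by omega⟩
      exact key_down r d hd

lemma cB_eq_two_mul {k : ℕ} (hk : 1 ≤ k) : centralBinom k = 2 * (k + k - 1).choose k := by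
  obtain ⟨j, rfl⟩ : ∃ j, k = j + 1 := ⟨k - 1, by omega⟩
  have h1 : 2 * (j + 1) = (2 * j + 1) + 1 := by omega
  have h2 : (2 * j + 1).choose j = (2 * j + 1).choose (j + 1) := by
    have := Nat.choose_symm (show j + 1 ≤ 2 * j + 1 by omega)
    simpa [show 2 * j + 1 - (j + 1) = j by omega] using this
  rw [centralBinom, h1, Nat.choose_succ_succ]
  have h3 : j + 1 + (j + 1) - 1 = 2 * j + 1 := by omega
  rw [h3, Nat.succ_eq_add_one, ← h2]
  omega

lemma nat_ineq (m n t : ℕ) (hm : 1 ≤ m) (hmn : n ≤ m) (h1 : m ≤ n + 1) (ht : t ≤ n + m) :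
    (n + t - 1).choose t * 2 ^ (n + 2 * m - t) ≤ 4 * (n + m + (n + m) - 1).choose (n + m) := by
  set C := (n + t - 1).choose t with hC
  set D := (n + m + (n + m) - 1).choose (n + m) with hD
  have hcb : centralBinom (n + m) = 2 * D := cB_eq_two_mul (by omega)
  have step1 : 2 ^ n * C * 4 ^ m ≤ 2 ^ t * (4 ^ m * centralBinom n) := by
    calc 2 ^ n * C * 4 ^ m ≤ 2 ^ t * centralBinom n * 4 ^ m :=
          Nat.mul_le_mul_right _ (key_lemma n t)
      _ = 2 ^ t * (4 ^ m * centralBinom n) := by ring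
  have step2 : 2 ^ t * (4 ^ m * centralBinom n) ≤ 2 ^ t * (2 * centralBinom (n + m)) :=
    Nat.mul_le_mul_left _ (four_pow_cB' h1)
  have step3 : 2 ^ n * C * 4 ^ m ≤ 2 ^ t * (4 * D) := by
    calc 2 ^ n * C * 4 ^ m ≤ 2 ^ t * (2 * centralBinom (n + m)) := le_trans step1 step2
      _ = 2 ^ t * (4 * D) := by rw [hcb]; ring
  have hpow : 2 ^ (n + 2 * m - t) * 2 ^ t = 2 ^ n * 4 ^ m := by
    rw [← pow_add, show n + 2 * m - t + t = n + 2 * m by omega,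
      show (4 : ℕ) = 2 ^ 2 from rfl, ← pow_mul, ← pow_add]
  have hmul : (C * 2 ^ (n + 2 * m - t)) * 2 ^ t ≤ (4 * D) * 2 ^ t := by
    calc (C * 2 ^ (n + 2 * m - t)) * 2 ^ t = C * (2 ^ (n + 2 * m - t) * 2 ^ t) := by ring
      _ = 2 ^ n * C * 4 ^ m := by rw [hpow]; ring
      _ ≤ 2 ^ t * (4 * D) := step3
      _ = (4 * D) * 2 ^ t := by ring
  exact le_of_mul_le_mul_right hmul (pow_pos (by norm_num) t)

end NatLemmas

open Nat in

lemma stars_bars (n M : ℕ) :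
    Nat.card {y : Fin n → ℕ // ∑ i, y i = M} = (n + M - 1).choose M := by
  have hset : {y : Fin n → ℕ | ∑ i, y i = M} = ↑(Finset.piAntidiag (Finset.univ : Finset (Fin n)) M) := by
    ext y; simp [Finset.mem_piAntidiag]
  have h1 : Nat.card {y : Fin n → ℕ // ∑ i, y i = M}
      = (Finset.piAntidiag (Finset.univ : Finset (Fin n)) M).card := by
    rw [show {y : Fin n → ℕ // ∑ i, y i = M} = ↥{y : Fin n → ℕ | ∑ i, y i = M} from rfl,
      Nat.card_coe_set_eq, hset, Set.ncard_coe_finset]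
  rw [h1, ← Finset.map_sym_eq_piAntidiag, Finset.card_map, Finset.sym_univ, Finset.card_univ,
    Sym.card_sym_eq_choose, Fintype.card_fin]

/-- The increment sequence of a tuple, with convention that the value before index 0 is 0. -/
def dstep {m : ℕ} (p : Fin m → ℤ) (i : Fin m) : ℤ :=
  p i - (if h : 0 < i.val then p ⟨i.val - 1, lt_of_le_of_lt (Nat.pred_le _) i.isLt⟩ else 0)

/-- Extension of `dstep` to `ℕ` by zero. -/
def dext {m : ℕ} (p : Fin m → ℤ) (i : ℕ) : ℤ :=
  if h : i < m then dstep p ⟨i, h⟩ else 0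

lemma tele {m : ℕ} (p : Fin m → ℤ) :
    ∀ j (h : j < m), (∑ i ∈ Finset.range (j + 1), dext p i) = p ⟨j, h⟩ := by
  intro j
  induction j with
  | zero =>
    intro h
    simp [dext, dstep, h]
  | succ j ih =>
    intro h
    rw [Finset.sum_range_succ, ih (by omega)]
    simp only [dext, dif_pos h, dstep]
    have : 0 < j + 1 := Nat.succ_pos j
    rw [dif_pos this]
    simp

lemma cons_succ_eq {k : ℕ} (b : Fin k → ℤ) (i : Fin k) :
    (Fin.cons 0 b : Fin (k + 1) → ℤ) i.succ = b i := by simp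

lemma cons_castSucc_eq {k : ℕ} (b : Fin k → ℤ) (i : Fin k) :
    (Fin.cons 0 b : Fin (k + 1) → ℤ) i.castSucc
      = if h : 0 < i.val then b ⟨i.val - 1, lt_of_le_of_lt (Nat.pred_le _) i.isLt⟩ else 0 := by
  by_cases h : 0 < i.val
  · rw [dif_pos h]
    have : i.castSucc = (⟨i.val - 1, lt_of_le_of_lt (Nat.pred_le _) i.isLt⟩ : Fin k).succ := by
      apply Fin.ext; simp [Fin.castSucc]; omega
    rw [this, Fin.cons_succ]
  · rw [dif_neg h]
    have : i.castSucc = (0 : Fin (k + 1)) := by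
      apply Fin.ext; simpa using by omega
    rw [this, Fin.cons_zero]

lemma isBridge_iff {k : ℕ} (hk : 0 < k) (b : Fin k → ℤ) :
    IsBridge b ↔ (∀ i : Fin k, -1 ≤ dstep b i) ∧ (∑ i ∈ Finset.range k, dext b i) = 0 := by
  have hstep : ∀ i : Fin k, (Fin.cons 0 b : Fin (k + 1) → ℤ) i.succ
      - (Fin.cons 0 b : Fin (k + 1) → ℤ) i.castSucc = dstep b i := by
    intro i
    rw [cons_succ_eq, cons_castSucc_eq, dstep]
  have hlast : (Fin.cons (0 : ℤ) b : Fin (k + 1) → ℤ) (Fin.last k) = b ⟨k - 1, by omega⟩ := by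
    have : Fin.last k = (⟨k - 1, by omega⟩ : Fin k).succ := by
      apply Fin.ext; simp [Fin.last]; omega
    rw [this, Fin.cons_succ]
  have hsum : (∑ i ∈ Finset.range k, dext b i) = b ⟨k - 1, by omega⟩ := by
    have := tele b (k - 1) (by omega)
    rwa [show k - 1 + 1 = k by omega] at this
  constructor
  · rintro ⟨h1, h2⟩
    refine ⟨fun i => by rw [← hstep i]; exact h1 i, ?_⟩
    rw [hsum, ← hlast, h2]
  · rintro ⟨h1, h2⟩
    refine ⟨fun i => by rw [hstep i]; exact h1 i, ?_⟩
    rw [hlast, ← hsum, h2]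

lemma card_fiber (k m n : ℕ) (hkeq : k = m + n) (hmk : m ≤ k) (hpos : 0 < k)
    (p : Fin m → ℤ) (s : ℤ)
    (hadm : ∀ i : Fin m, -1 ≤ dstep p i)
    (hsum : (∑ i ∈ Finset.range m, dext p i) = s)
    (hs : s ≤ (n : ℤ)) :
    Nat.card {b : Fin k → ℤ // IsBridge b ∧
        (∀ i : Fin m, b (Fin.castLE hmk i) = p i)} =
      (n + ((n : ℤ) - s).toNat - 1).choose (((n : ℤ) - s).toNat) := by
  subst hkeq
  set k := m + n with hk
  set tt := (((n : ℤ) - s).toNat) with htt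
  have httz : (tt : ℤ) = (n : ℤ) - s := Int.toNat_of_nonneg (by omega)
  -- increments associated to a suffix tuple z
  set w : (Fin n → ℕ) → ℕ → ℤ := fun z i =>
    if i < m then dext p i else (if h : i - m < n then (z ⟨i - m, h⟩ : ℤ) - 1 else 0) with hw
  set Φ : (Fin n → ℕ) → (Fin k → ℤ) := fun z j => ∑ i ∈ Finset.range (j.val + 1), w z i with hΦ
  -- partial sums of Φ recover w
  have hdstep : ∀ z (j : Fin k), dstep (Φ z) j = w z j.val := by
    intro z j
    rw [dstep]
    by_cases h : 0 < j.val
    · rw [dif_pos h]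
      have h1 : Φ z j = ∑ i ∈ Finset.range (j.val + 1), w z i := rfl
      have h2 : Φ z ⟨j.val - 1, lt_of_le_of_lt (Nat.pred_le _) j.isLt⟩
          = ∑ i ∈ Finset.range j.val, w z i := by
        simp only [hΦ]
        rw [show j.val - 1 + 1 = j.val from by omega]
      rw [h1, h2, Finset.sum_range_succ]
      ring
    · rw [dif_neg h]
      have hj : j.val = 0 := by omega
      have h1 : Φ z j = ∑ i ∈ Finset.range 1, w z i := by
        simp only [hΦ, hj]
      rw [h1, Finset.sum_range_one, hj]
      ring
  have hdext : ∀ z i, i < k → dext (Φ z) i = w z i := by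
    intro z i hi
    rw [dext, dif_pos hi, hdstep]
  -- prefix property
  have hprefix : ∀ z (i : Fin m), Φ z (Fin.castLE (hmk) i) = p i := by
    intro z i
    have h1 : Φ z (Fin.castLE (hmk) i)
        = ∑ l ∈ Finset.range (i.val + 1), w z l := rfl
    rw [h1]
    have h2 : ∀ l ∈ Finset.range (i.val + 1), w z l = dext p l := by
      intro l hl
      rw [Finset.mem_range] at hl
      have : l < m := by omega
      simp only [hw, if_pos this]
    rw [Finset.sum_congr rfl h2, tele p i.val i.isLt]
  -- sum of all increments
  have hwsum : ∀ z, (∑ j, (z j : ℤ)) = (tt : ℤ) →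
      (∑ i ∈ Finset.range k, w z i) = 0 := by
    intro z hz
    have hsplit : (∑ i ∈ Finset.range k, w z i)
        = (∑ i ∈ Finset.range m, w z i) + ∑ i ∈ Finset.Ico m k, w z i := by
      rw [Finset.range_eq_Ico, ← Finset.sum_Ico_consecutive _ (Nat.zero_le m) (hmk),
        ← Finset.range_eq_Ico]
    have h1 : (∑ i ∈ Finset.range m, w z i) = s := by
      rw [← hsum]
      apply Finset.sum_congr rfl
      intro l hl
      rw [Finset.mem_range] at hl
      simp only [hw, if_pos hl]
    have h2 : (∑ i ∈ Finset.Ico m k, w z i) = (∑ j, (z j : ℤ)) - n := by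
      rw [Finset.sum_Ico_eq_sum_range]
      have hkm : k - m = n := by omega
      rw [hkm]
      have h3 : ∀ j ∈ Finset.range n, w z (m + j) = (if h : j < n then (z ⟨j, h⟩ : ℤ) else 0) - 1 := by
        intro j hj
        rw [Finset.mem_range] at hj
        simp only [hw, if_neg (by omega : ¬ m + j < m), dif_pos (show m + j - m < n by omega)]
        rw [dif_pos hj]
        have hidx : m + j - m = j := by omega
        simp only [hidx]
      rw [Finset.sum_congr rfl h3, Finset.sum_sub_distrib]
      have h4 : (∑ j ∈ Finset.range n, (if h : j < n then (z ⟨j, h⟩ : ℤ) else 0))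
          = ∑ j, (z j : ℤ) := by
        rw [← Fin.sum_univ_eq_sum_range]
        apply Finset.sum_congr rfl
        intro i _
        rw [dif_pos i.isLt]
      rw [h4]
      simp
    rw [hsplit, h1, h2, hz, httz]
    ring
  -- the map
  have hmaps : ∀ z : {z : Fin n → ℕ // ∑ j, z j = tt}, IsBridge (Φ z.val) ∧
      (∀ i : Fin m, Φ z.val (Fin.castLE (hmk) i) = p i) := by
    rintro ⟨z, hz⟩
    have hzz : (∑ j, (z j : ℤ)) = (tt : ℤ) := by
      push_cast [← hz]
      norm_cast
    refine ⟨(isBridge_iff hpos _).2 ⟨?_, ?_⟩, hprefix z⟩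
    · intro i
      rw [hdstep]
      simp only [hw]
      by_cases h1 : i.val < m
      · rw [if_pos h1]
        have := hadm ⟨i.val, h1⟩
        rw [dext, dif_pos h1]
        exact this
      · rw [if_neg h1]
        by_cases h2 : i.val - m < n
        · rw [dif_pos h2]
          have : (0 : ℤ) ≤ (z ⟨i.val - m, h2⟩ : ℤ) := Int.ofNat_nonneg _
          omega
        · rw [dif_neg h2]; norm_num
    · rw [Finset.sum_congr rfl (fun i hi => hdext z i (Finset.mem_range.1 hi))]
      exact hwsum z hzz
  let F : {z : Fin n → ℕ // ∑ j, z j = tt} →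
      {b : Fin k → ℤ // IsBridge b ∧ (∀ i : Fin m, b (Fin.castLE (hmk) i) = p i)} :=
    fun z => ⟨Φ z.val, hmaps z⟩
  have hinj : Function.Injective F := by
    rintro ⟨z, hz⟩ ⟨z', hz'⟩ h
    have hΦeq : Φ z = Φ z' := congrArg Subtype.val h
    apply Subtype.ext
    funext j
    have h1 : dstep (Φ z) ⟨m + j.val, by omega⟩ = dstep (Φ z') ⟨m + j.val, by omega⟩ := by
      rw [hΦeq]
    rw [hdstep, hdstep] at h1
    simp only [hw, if_neg (by omega : ¬ m + j.val < m),
      dif_pos (show m + j.val - m < n by omega)] at h1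
    have hidx : m + j.val - m = j.val := by omega
    simp only [hidx, Fin.eta] at h1
    have h2 : (z j : ℤ) = z' j := by omega
    exact_mod_cast h2
  have hsurj : Function.Surjective F := by
    rintro ⟨b, hb, hpre⟩
    have hb' := (isBridge_iff hpos b).1 hb
    -- the suffix tuple
    set z : Fin n → ℕ := fun j => ((dstep b ⟨m + j.val, by omega⟩) + 1).toNat with hz
    have hznn : ∀ j : Fin n, ((z j : ℤ)) = dstep b ⟨m + j.val, by omega⟩ + 1 := by
      intro j
      rw [hz]
      exact Int.toNat_of_nonneg (by have := hb'.1 ⟨m + j.val, by omega⟩; omega)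
    -- increments of b agree with p's on the prefix
    have hdpre : ∀ i, i < m → dext b i = dext p i := by
      intro i hi
      rw [dext, dext, dif_pos (show i < k by omega), dif_pos hi, dstep, dstep]
      have e1 : b ⟨i, by omega⟩ = p ⟨i, hi⟩ := hpre ⟨i, hi⟩
      rw [e1]
      by_cases h0 : 0 < i
      · rw [dif_pos h0, dif_pos h0]
        have e2 : b ⟨i - 1, by omega⟩ = p ⟨i - 1, by omega⟩ :=
          hpre ⟨i - 1, by omega⟩
        rw [e2]
      · simp only [dif_neg h0]
    -- w z agrees with increments of b everywhere below k
    have hwb : ∀ i, i < k → w z i = dext b i := by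
      intro i hi
      by_cases h1 : i < m
      · simp only [hw, if_pos h1]
        exact (hdpre i h1).symm
      · simp only [hw, if_neg h1, dif_pos (show i - m < n by omega)]
        rw [hznn ⟨i - m, by omega⟩]
        rw [dext, dif_pos hi]
        have : (⟨m + (i - m), by omega⟩ : Fin k) = ⟨i, hi⟩ := by
          apply Fin.ext; simp; omega
        rw [this]
        ring
    have hzsum : ∑ j, z j = tt := by
      have hcast : ((∑ j, z j : ℕ) : ℤ) = (tt : ℤ) := by
        push_cast
        have h1 : (∑ j, (z j : ℤ)) = ∑ j ∈ Finset.range n, (dext b (m + j) + 1) := by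
          have e : ∀ j : Fin n, (z j : ℤ) = dext b (m + j.val) + 1 := by
            intro j
            rw [hznn j]
            simp only [dext]
            rw [dif_pos (show m + j.val < k by have := j.isLt; omega)]
          rw [Finset.sum_congr rfl (fun j _ => e j)]
          exact Fin.sum_univ_eq_sum_range (fun j => dext b (m + j) + 1) n
        rw [h1, Finset.sum_add_distrib]
        have h2 : (∑ j ∈ Finset.range n, dext b (m + j)) = ∑ i ∈ Finset.Ico m k, dext b i := by
          rw [Finset.sum_Ico_eq_sum_range, show k - m = n by omega]
        have h3 : (∑ i ∈ Finset.range m, dext b i) + (∑ i ∈ Finset.Ico m k, dext b i) = 0 := by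
          rw [← hb'.2, Finset.range_eq_Ico,
            Finset.sum_Ico_consecutive _ (Nat.zero_le m) (hmk),
            ← Finset.range_eq_Ico]
        have h4 : (∑ i ∈ Finset.range m, dext b i) = s := by
          rw [← hsum]
          exact Finset.sum_congr rfl (fun i hi => hdpre i (Finset.mem_range.1 hi))
        have h5 : (∑ i ∈ Finset.Ico m k, dext b i) = -s := by omega
        rw [h2, h5]
        simp only [Finset.sum_const, Finset.card_range, nsmul_eq_mul, mul_one, httz]
        ring
      exact_mod_cast hcast
    refine ⟨⟨z, hzsum⟩, ?_⟩
    apply Subtype.ext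
    funext j
    show Φ z j = b j
    have h1 : Φ z j = ∑ i ∈ Finset.range (j.val + 1), w z i := rfl
    rw [h1, Finset.sum_congr rfl (fun i hi => hwb i (by
      have := Finset.mem_range.1 hi; omega))]
    rw [tele b j.val j.isLt]
  have := Nat.card_eq_of_bijective F ⟨hinj, hsurj⟩
  rw [← this, stars_bars]

lemma mu_fiber {Ω : Type} [MeasurableSpace Ω] (μ : Measure Ω) [IsProbabilityMeasure μ]
    (ξ : ℕ → Ω → ℤ)
    (hindep : iIndepFun ξ μ)
    (hlaw : ∀ n (i : ℤ), μ {ω | ξ n ω = i} =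
      if -1 ≤ i then (2 : ℝ≥0∞)⁻¹ ^ (i + 2).toNat else 0)
    (S : ℕ → Ω → ℤ) (hS : ∀ n ω, S n ω = ∑ i ∈ Finset.range n, ξ i ω)
    (m : ℕ) (p : Fin m → ℤ) (s : ℤ)
    (hadm : ∀ i : Fin m, -1 ≤ dstep p i)
    (hsum : (∑ i ∈ Finset.range m, dext p i) = s) :
    μ {ω | (fun i : Fin m => S ((i : ℕ) + 1) ω) = p} = (2 : ℝ≥0∞)⁻¹ ^ ((s + 2 * m).toNat) := by
  have hset : {ω | (fun i : Fin m => S ((i : ℕ) + 1) ω) = p}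
      = ⋂ i ∈ Finset.range m, ξ i ⁻¹' {dext p i} := by
    ext ω
    simp only [Set.mem_setOf_eq, Set.mem_iInter, Set.mem_preimage, Set.mem_singleton_iff,
      Finset.mem_range]
    constructor
    · intro h i him
      have hS1 : S (i + 1) ω = p ⟨i, him⟩ := congrFun h ⟨i, him⟩
      have hxi : ξ i ω = S (i + 1) ω - S i ω := by
        rw [hS, hS, Finset.sum_range_succ]; ring
      rw [hxi, hS1, dext, dif_pos him, dstep]
      by_cases h0 : 0 < i
      · rw [dif_pos h0]
        have h2 : S i ω = p ⟨i - 1, by omega⟩ := by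
          have := congrFun h ⟨i - 1, by omega⟩
          simpa [show i - 1 + 1 = i by omega] using this
        rw [h2]
      · rw [dif_neg h0]
        have : i = 0 := by omega
        subst this
        simp [hS]
    · intro h
      funext j
      show S (j.val + 1) ω = p j
      have h1 : S (j.val + 1) ω = ∑ i ∈ Finset.range (j.val + 1), dext p i := by
        rw [hS]
        apply Finset.sum_congr rfl
        intro i hi
        exact h i (by have := j.isLt; have := Finset.mem_range.1 hi; omega)
      rw [h1, tele p j.val j.isLt]
  rw [hset]
  have hprod := hindep.measure_inter_preimage_eq_mul (Finset.range m)
    (sets := fun i => ({dext p i} : Set ℤ)) (fun i _ => measurableSet_singleton _)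
  rw [hprod]
  have hfac : ∀ i ∈ Finset.range m,
      μ (ξ i ⁻¹' {dext p i}) = (2 : ℝ≥0∞)⁻¹ ^ (dext p i + 2).toNat := by
    intro i hi
    rw [Finset.mem_range] at hi
    have hpre : ξ i ⁻¹' {dext p i} = {ω | ξ i ω = dext p i} := by
      ext ω; simp
    rw [hpre, hlaw i (dext p i), if_pos]
    have := hadm ⟨i, hi⟩
    rw [dext, dif_pos hi]
    exact this
  rw [Finset.prod_congr rfl hfac, Finset.prod_pow_eq_pow_sum]
  congr 1
  have hcast : ((∑ i ∈ Finset.range m, (dext p i + 2).toNat : ℕ) : ℤ) = s + 2 * m := by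
    push_cast
    have h2 : ∀ i ∈ Finset.range m, ((dext p i + 2).toNat : ℤ) = dext p i + 2 := by
      intro i hi
      rw [Finset.mem_range] at hi
      have := hadm ⟨i, hi⟩
      rw [Int.toNat_of_nonneg]
      rw [dext, dif_pos hi]; omega
    rw [Finset.sum_congr rfl h2, Finset.sum_add_distrib, hsum]
    simp [mul_comm]
  omega
theorem stmt2_aux {Ω : Type} [MeasurableSpace Ω] (μ : Measure Ω) [IsProbabilityMeasure μ]
    (ξ : ℕ → Ω → ℤ) (hmeas : ∀ n, Measurable (ξ n))
    (hindep : iIndepFun ξ μ)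
    (hlaw : ∀ n (i : ℤ), μ {ω | ξ n ω = i} =
      if -1 ≤ i then (2 : ℝ≥0∞)⁻¹ ^ (i + 2).toNat else 0)
    (S : ℕ → Ω → ℤ) (hS : ∀ n ω, S n ω = ∑ i ∈ Finset.range n, ξ i ω)
    (k m n : ℕ) (hkeq : k = m + n) (hmk : m ≤ k) (hm1 : 1 ≤ m) (hnm : n ≤ m)
    (hmn1 : m ≤ n + 1) (A : Set (Fin m → ℤ)) :
      (Nat.card {b : Fin k → ℤ // IsBridge b ∧
          (fun i : Fin m => b (Fin.castLE hmk i)) ∈ A} : ℝ≥0∞)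
        / (Nat.card {b : Fin k → ℤ // IsBridge b} : ℝ≥0∞)
      ≤ 4 * μ {ω | (fun i : Fin m => S ((i : ℕ) + 1) ω) ∈ A} := by
  classical
  have hkpos : 0 < k := by omega
  have hSmeas : ∀ j, Measurable (S j) := by
    intro j
    have : S j = fun ω => ∑ i ∈ Finset.range j, ξ i ω := funext (hS j)
    rw [this]
    exact Finset.measurable_sum _ (fun i _ => hmeas i)
  -- the denominator
  have hD : Nat.card {b : Fin k → ℤ // IsBridge b} = (k + k - 1).choose k := by
    have h0 := card_fiber k 0 k (by omega) (Nat.zero_le k) hkpos (fun i => i.elim0) 0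
      (fun i => i.elim0) (by simp) (by positivity)
    have h1 : (((k : ℤ)) - 0).toNat = k := by simp
    rw [h1] at h0
    calc Nat.card {b : Fin k → ℤ // IsBridge b}
        = Nat.card {b : Fin k → ℤ // IsBridge b ∧
            (∀ i : Fin 0, b (Fin.castLE (Nat.zero_le k) i) = i.elim0)} :=
          Nat.card_congr (Equiv.subtypeEquivRight (fun b =>
            ⟨fun h => ⟨h, fun i => i.elim0⟩, fun h => h.1⟩))
      _ = (k + k - 1).choose k := h0
  have hDpos : 0 < (k + k - 1).choose k := Nat.choose_pos (by omega)
  have hfinB : Finite {b : Fin k → ℤ // IsBridge b} :=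
    Nat.finite_of_card_ne_zero (by rw [hD]; omega)
  have hfinBset : {b : Fin k → ℤ | IsBridge b}.Finite := Set.finite_coe_iff.mp hfinB
  set SA : Set (Fin k → ℤ) :=
    {b | IsBridge b ∧ (fun i : Fin m => b (Fin.castLE hmk i)) ∈ A} with hSAdef
  have hSAfin : SA.Finite := hfinBset.subset (fun b hb => hb.1)
  set T : Finset (Fin k → ℤ) := hSAfin.toFinset with hTdef
  set pre : (Fin k → ℤ) → (Fin m → ℤ) := fun b i => b (Fin.castLE hmk i) with hpredef
  set F0 : Finset (Fin m → ℤ) := T.image pre with hF0def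
  have hF0A : ∀ p ∈ F0, p ∈ A := by
    intro p hp
    obtain ⟨b, hbT, hbp⟩ := Finset.mem_image.1 hp
    have hb : b ∈ SA := hSAfin.mem_toFinset.mp hbT
    rw [← hbp]
    exact hb.2
  -- the per-prefix bound
  have hperp : ∀ p ∈ F0, ((T.filter fun b => pre b = p).card : ℝ≥0∞)
      ≤ 4 * ((k + k - 1).choose k : ℝ≥0∞) *
        μ {ω | (fun i : Fin m => S ((i : ℕ) + 1) ω) = p} := by
    intro p hp
    obtain ⟨b0, hb0T, hb0p⟩ := Finset.mem_image.1 hp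
    have hb0 : b0 ∈ SA := hSAfin.mem_toFinset.mp hb0T
    have hbr : IsBridge b0 := hb0.1
    have hb' := (isBridge_iff hkpos b0).1 hbr
    have hpre0 : ∀ i : Fin m, b0 (Fin.castLE hmk i) = p i := fun i => congrFun hb0p i
    -- increments of p agree with those of b0
    have hdpre : ∀ i, i < m → dext p i = dext b0 i := by
      intro i hi
      rw [dext, dext, dif_pos (show i < k by omega), dif_pos hi, dstep, dstep]
      have e1 : p ⟨i, hi⟩ = b0 ⟨i, by omega⟩ := (hpre0 ⟨i, hi⟩).symm
      rw [e1]
      by_cases h0 : 0 < i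
      · rw [dif_pos h0, dif_pos h0]
        have e2 : p ⟨i - 1, by omega⟩ = b0 ⟨i - 1, by omega⟩ := (hpre0 ⟨i - 1, by omega⟩).symm
        rw [e2]
      · simp only [dif_neg h0]
    have hadm_p : ∀ i : Fin m, -1 ≤ dstep p i := by
      intro i
      have h1 : dext p i.val = dext b0 i.val := hdpre i.val i.isLt
      rw [dext, dif_pos i.isLt, dext, dif_pos (show i.val < k by have := i.isLt; omega)] at h1
      rw [show i = ⟨i.val, i.isLt⟩ from (Fin.eta i i.isLt).symm, h1]
      exact hb'.1 _
    set sp : ℤ := ∑ i ∈ Finset.range m, dext p i with hspdef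
    have hspb : ∑ i ∈ Finset.range m, dext b0 i = sp := by
      rw [hspdef]
      exact (Finset.sum_congr rfl (fun i hi => (hdpre i (Finset.mem_range.1 hi)))).symm
    have hsm : -(m : ℤ) ≤ sp := by
      rw [hspdef]
      have h1 : ∀ i ∈ Finset.range m, (-1 : ℤ) ≤ dext p i := by
        intro i hi
        have hi' := Finset.mem_range.1 hi
        rw [dext, dif_pos hi']
        exact hadm_p _
      have := Finset.sum_le_sum h1
      simpa using this
    have hsn : sp ≤ (n : ℤ) := by
      have hsplit : (∑ i ∈ Finset.range m, dext b0 i) + (∑ i ∈ Finset.Ico m k, dext b0 i) = 0 := by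
        rw [← hb'.2, Finset.range_eq_Ico,
          Finset.sum_Ico_consecutive _ (Nat.zero_le m) hmk, ← Finset.range_eq_Ico]
      have h1 : ∀ i ∈ Finset.Ico m k, (-1 : ℤ) ≤ dext b0 i := by
        intro i hi
        have hi' := (Finset.mem_Ico.1 hi).2
        rw [dext, dif_pos hi']
        exact hb'.1 _
      have h2 := Finset.sum_le_sum h1
      rw [Finset.sum_const, Nat.card_Ico] at h2
      rw [hspb] at hsplit
      have : (k : ℤ) - m = n := by push_cast [hkeq]; ring
      simp only [nsmul_eq_mul, mul_neg_one] at h2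
      omega
    set tt : ℕ := (((n : ℤ)) - sp).toNat with httdef
    have httz : (tt : ℤ) = (n : ℤ) - sp := Int.toNat_of_nonneg (by omega)
    have hpA : p ∈ A := hF0A p hp
    -- identify the filtered card with a fiber card
    have hfilter : ((T.filter fun b => pre b = p) : Set (Fin k → ℤ))
        = {b : Fin k → ℤ | IsBridge b ∧ (∀ i : Fin m, b (Fin.castLE hmk i) = p i)} := by
      ext b
      simp only [Finset.coe_filter, Set.mem_setOf_eq, Finset.mem_coe, hTdef, hSAfin.mem_toFinset]
      constructor
      · rintro ⟨⟨h1, _⟩, h3⟩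
        exact ⟨h1, fun i => congrFun h3 i⟩
      · rintro ⟨h1, h2⟩
        have hbp : pre b = p := funext h2
        refine ⟨⟨h1, ?_⟩, hbp⟩
        show pre b ∈ A
        rw [hbp]
        exact hpA
    have hcard_p : (T.filter fun b => pre b = p).card = (n + tt - 1).choose tt := by
      have h1 := card_fiber k m n hkeq hmk hkpos p sp hadm_p rfl hsn
      rw [← httdef] at h1
      rw [← h1]
      have h2 : Nat.card {b : Fin k → ℤ // IsBridge b ∧
          (∀ i : Fin m, b (Fin.castLE hmk i) = p i)}
          = ((T.filter fun b => pre b = p) : Set (Fin k → ℤ)).ncard := by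
        rw [hfilter]
        exact Nat.card_coe_set_eq _
      rw [h2, Set.ncard_coe_finset]
    -- the probability of the fiber
    have hmu_p : μ {ω | (fun i : Fin m => S ((i : ℕ) + 1) ω) = p}
        = (2 : ℝ≥0∞)⁻¹ ^ ((sp + 2 * m).toNat) :=
      mu_fiber μ ξ hindep hlaw S hS m p sp hadm_p rfl
    rw [hcard_p, hmu_p]
    -- now a pure computation
    have htt_le : tt ≤ n + m := by omega
    have he : (sp + 2 * m).toNat = n + 2 * m - tt := by omega
    rw [he]
    have hnat := nat_ineq m n tt hm1 hnm hmn1 htt_le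
    have hkk : n + m + (n + m) - 1 = k + k - 1 := by omega
    have hkk2 : n + m = k := by omega
    rw [hkk, hkk2] at hnat
    -- convert to ℝ≥0∞
    have h2pow_ne : ((2 : ℝ≥0∞) ^ (n + 2 * m - tt)) ≠ 0 := by positivity
    have h2pow_ne' : ((2 : ℝ≥0∞) ^ (n + 2 * m - tt)) ≠ ⊤ := by
      exact ENNReal.pow_ne_top (by norm_num)
    rw [← ENNReal.inv_pow, mul_comm (4 * ((k + k - 1).choose k : ℝ≥0∞)), ← ENNReal.div_eq_inv_mul,
      ENNReal.le_div_iff_mul_le (Or.inl h2pow_ne) (Or.inl h2pow_ne')]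
    calc ((n + tt - 1).choose tt : ℝ≥0∞) * 2 ^ (n + 2 * m - tt)
        = (((n + tt - 1).choose tt * 2 ^ (n + 2 * m - tt) : ℕ) : ℝ≥0∞) := by push_cast; ring
      _ ≤ ((4 * (k + k - 1).choose k : ℕ) : ℝ≥0∞) := by exact_mod_cast hnat
      _ = 4 * ((k + k - 1).choose k : ℝ≥0∞) := by push_cast; ring
  -- the events are measurable and pairwise disjoint
  set E : (Fin m → ℤ) → Set Ω := fun p => {ω | (fun i : Fin m => S ((i : ℕ) + 1) ω) = p}
    with hEdef
  have hEmeas : ∀ p, MeasurableSet (E p) := by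
    intro p
    have : E p = ⋂ i : Fin m, (S ((i : ℕ) + 1)) ⁻¹' {p i} := by
      ext ω
      simp [hEdef, funext_iff]
    rw [this]
    exact MeasurableSet.iInter (fun i => (hSmeas _) (measurableSet_singleton _))
  have hEdisj : (↑F0 : Set (Fin m → ℤ)).PairwiseDisjoint E := by
    intro p _ q _ hpq
    rw [Function.onFun, Set.disjoint_left]
    intro ω hωp hωq
    exact hpq (hωp.symm.trans hωq)
  have hEsub : (⋃ p ∈ F0, E p) ⊆ {ω | (fun i : Fin m => S ((i : ℕ) + 1) ω) ∈ A} := by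
    intro ω hω
    obtain ⟨p, hp, hωp⟩ := Set.mem_iUnion₂.1 hω
    show (fun i : Fin m => S ((i : ℕ) + 1) ω) ∈ A
    rw [hωp]
    exact hF0A p hp
  -- numerator bound
  have hnum : (Nat.card {b : Fin k → ℤ // IsBridge b ∧
        (fun i : Fin m => b (Fin.castLE hmk i)) ∈ A} : ℝ≥0∞)
      ≤ 4 * ((k + k - 1).choose k : ℝ≥0∞) *
        μ {ω | (fun i : Fin m => S ((i : ℕ) + 1) ω) ∈ A} := by
    have hc1 : Nat.card {b : Fin k → ℤ // IsBridge b ∧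
        (fun i : Fin m => b (Fin.castLE hmk i)) ∈ A} = T.card := by
      rw [show {b : Fin k → ℤ // IsBridge b ∧ (fun i : Fin m => b (Fin.castLE hmk i)) ∈ A}
          = ↥SA from rfl, Nat.card_coe_set_eq, Set.ncard_eq_toFinset_card _ hSAfin]
    have hc2 : T.card = ∑ p ∈ F0, (T.filter fun b => pre b = p).card :=
      Finset.card_eq_sum_card_image pre T
    calc (Nat.card {b : Fin k → ℤ // IsBridge b ∧
          (fun i : Fin m => b (Fin.castLE hmk i)) ∈ A} : ℝ≥0∞)
        = ∑ p ∈ F0, ((T.filter fun b => pre b = p).card : ℝ≥0∞) := by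
          rw [hc1, hc2]; push_cast; rfl
      _ ≤ ∑ p ∈ F0, 4 * ((k + k - 1).choose k : ℝ≥0∞) * μ (E p) :=
          Finset.sum_le_sum hperp
      _ = 4 * ((k + k - 1).choose k : ℝ≥0∞) * ∑ p ∈ F0, μ (E p) := by
          rw [Finset.mul_sum]
      _ = 4 * ((k + k - 1).choose k : ℝ≥0∞) * μ (⋃ p ∈ F0, E p) := by
          rw [measure_biUnion_finset hEdisj (fun p _ => hEmeas p)]
      _ ≤ 4 * ((k + k - 1).choose k : ℝ≥0∞) *
          μ {ω | (fun i : Fin m => S ((i : ℕ) + 1) ω) ∈ A} := by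
          exact mul_le_mul_right (measure_mono hEsub) _
  -- final division
  rw [hD, ENNReal.div_le_iff_le_mul
    (Or.inl (by exact_mod_cast hDpos.ne' : ((k + k - 1).choose k : ℝ≥0∞) ≠ 0))
    (Or.inl (ENNReal.natCast_ne_top _))]
  calc (Nat.card {b : Fin k → ℤ // IsBridge b ∧
        (fun i : Fin m => b (Fin.castLE hmk i)) ∈ A} : ℝ≥0∞)
      ≤ 4 * ((k + k - 1).choose k : ℝ≥0∞) *
        μ {ω | (fun i : Fin m => S ((i : ℕ) + 1) ω) ∈ A} := hnum
    _ = 4 * μ {ω | (fun i : Fin m => S ((i : ℕ) + 1) ω) ∈ A} *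
        ((k + k - 1).choose k : ℝ≥0∞) := by ring

theorem stmt2 {Ω : Type} [MeasurableSpace Ω] (μ : Measure Ω) [IsProbabilityMeasure μ]
    (ξ : ℕ → Ω → ℤ) (hmeas : ∀ n, Measurable (ξ n))
    (hindep : iIndepFun ξ μ)
    (hlaw : ∀ n (i : ℤ), μ {ω | ξ n ω = i} =
      if -1 ≤ i then (2 : ℝ≥0∞)⁻¹ ^ (i + 2).toNat else 0)
    (S : ℕ → Ω → ℤ) (hS : ∀ n ω, S n ω = ∑ i ∈ Finset.range n, ξ i ω) :
    ∃ K : ℝ, 0 < K ∧ ∀ (k : ℕ) (hk : 1 ≤ k) (A : Set (Fin ((k + 1) / 2) → ℤ)),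
      (Nat.card {b : Fin k → ℤ // IsBridge b ∧
          (fun i : Fin ((k + 1) / 2) => b (Fin.castLE (by omega) i)) ∈ A} : ℝ≥0∞)
        / (Nat.card {b : Fin k → ℤ // IsBridge b} : ℝ≥0∞)
      ≤ ENNReal.ofReal K *
          μ {ω | (fun i : Fin ((k + 1) / 2) => S ((i : ℕ) + 1) ω) ∈ A} := by
  refine ⟨4, by norm_num, ?_⟩
  intro k hk A
  have hof : ENNReal.ofReal (4 : ℝ) = (4 : ℝ≥0∞) := by rw [ENNReal.ofReal_ofNat]
  rw [hof]
  exact stmt2_aux μ ξ hmeas hindep hlaw S hS k ((k + 1) / 2) (k - (k + 1) / 2)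
    (by omega) (by omega) (by omega) (by omega) (by omega) A
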